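/- arXiv:1703.00437 — 3 statements merged into one kernel-verified Lean document; each statement's English description precedes it below -/
import Mathlib

section
/- Uniqueness for the discrete Navier–Stokes problem under a smallness condition: with the setting of the a priori bound, additionally assume |c̃_h(w; u, v)| ≤ Ĉ ‖w‖ ‖u‖ ‖v‖ for all w,u,v, and that γ_h := Ĉ ‖f_h‖_* / (α² ν²) < 1. Then there is at most one u_h ∈ Z_h solving ν a_h(u_h, v) + c̃_h(u_h; u_h, v) = f_h(v) for all v ∈ Z_h. -/
/-- Uniqueness for the discrete Navier–Stokes problem under the smallness
condition `γ_h := Ĉ ‖f_h‖_* / (α² ν²) < 1`. -/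
theorem stmt6 (Z : Type*) [NormedAddCommGroup Z] [NormedSpace ℝ Z]
    (ν α C : ℝ) (hν : 0 < ν) (hα : 0 < α) (hC : 0 < C)
    (a : Z →ₗ[ℝ] Z →ₗ[ℝ] ℝ)
    (hcoer : ∀ v : Z, α * ‖v‖ ^ 2 ≤ a v v)
    (c : Z →ₗ[ℝ] Z →ₗ[ℝ] Z →ₗ[ℝ] ℝ)
    (hskew : ∀ w u v : Z, c w u v = - c w v u)
    (hbound : ∀ w u v : Z, |c w u v| ≤ C * ‖w‖ * ‖u‖ * ‖v‖)
    (f : Z →L[ℝ] ℝ)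
    (hsmall : C * ‖f‖ / (α ^ 2 * ν ^ 2) < 1)
    (u₁ u₂ : Z)
    (h₁ : ∀ v : Z, ν * a u₁ v + c u₁ u₁ v = f v)
    (h₂ : ∀ v : Z, ν * a u₂ v + c u₂ u₂ v = f v) :
    u₁ = u₂ := by
  have hzero : ∀ w v : Z, c w v v = 0 := by
    intro w v
    have := hskew w v v
    linarith
  -- a priori bound on u₁
  have hfu : ν * a u₁ u₁ = f u₁ := by
    have h := h₁ u₁
    have hz := hzero u₁ u₁
    linarith
  have hap : α * ν * ‖u₁‖ ^ 2 ≤ ‖f‖ * ‖u₁‖ := by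
    have h1 : α * ‖u₁‖ ^ 2 ≤ a u₁ u₁ := hcoer u₁
    have h2 : f u₁ ≤ ‖f‖ * ‖u₁‖ := by
      calc f u₁ ≤ |f u₁| := le_abs_self _
        _ ≤ ‖f‖ * ‖u₁‖ := by
          have := f.le_opNorm u₁
          simpa [Real.norm_eq_abs] using this
    nlinarith
  set e := u₁ - u₂ with he
  -- error equation
  have heq : ν * a e e + c e u₁ e = 0 := by
    have hA := h₁ e
    have hB := h₂ e
    have hz := hzero u₂ e
    have hexp : c e u₁ e = c u₁ u₁ e - c u₂ u₁ e := by
      simp [he, map_sub, LinearMap.sub_apply]; ring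
    have hexp2 : c u₂ e e = c u₂ u₁ e - c u₂ u₂ e := by
      simp [he, map_sub, LinearMap.sub_apply]; ring
    have hAexp : a e e = a u₁ e - a u₂ e := by
      simp [he, map_sub, LinearMap.sub_apply]; ring
    rw [hexp, hAexp]
    have : c u₂ u₁ e = c u₂ u₂ e := by linarith
    linarith
  -- estimate
  have hne : α * ν * ‖e‖ ^ 2 ≤ C * (‖f‖ / (α * ν)) * ‖e‖ ^ 2 := by
    have h1 : α * ‖e‖ ^ 2 ≤ a e e := hcoer e
    have h2 : ν * a e e = - c e u₁ e := by linarith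
    have h3' : - c e u₁ e ≤ C * ‖e‖ * ‖u₁‖ * ‖e‖ := by
      have hb := hbound e u₁ e
      have hn := neg_abs_le (c e u₁ e)
      linarith
    have hu1 : ‖u₁‖ ≤ ‖f‖ / (α * ν) := by
      rcases (norm_nonneg u₁).eq_or_lt with h | h
      · rw [← h]; positivity
      · rw [le_div_iff₀ (by positivity)]
        nlinarith
    have hnn : (0:ℝ) ≤ ‖e‖ := norm_nonneg e
    nlinarith [mul_le_mul_of_nonneg_left h1 hν.le,
      mul_le_mul_of_nonneg_left hu1 (by positivity : (0:ℝ) ≤ C * ‖e‖ * ‖e‖)]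
  have hClt : C * ‖f‖ < α ^ 2 * ν ^ 2 := by
    have hpos : (0:ℝ) < α ^ 2 * ν ^ 2 := by positivity
    rw [div_lt_one hpos] at hsmall
    exact hsmall
  have hez : ‖e‖ = 0 := by
    by_contra h
    have h' : 0 < ‖e‖ := (norm_nonneg e).lt_of_ne (Ne.symm h)
    have hq : C * (‖f‖ / (α * ν)) < α * ν := by
      rw [mul_div_assoc'] at *
      rw [div_lt_iff₀ (by positivity)]
      nlinarith
    nlinarith [mul_pos (sub_pos.mpr hq) (pow_pos h' 2)]
  have : e = 0 := norm_eq_zero.mp hez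
  exact sub_eq_zero.mp this
end

section
/- Abstract inf-sup approximation of the discrete kernel: let V_h ⊆ V be a closed subspace of a Hilbert space V, Q_h a Hilbert space, and b : V × Q_h → ℝ a bounded bilinear form (bound ‖b‖) satisfying the discrete inf-sup condition sup_{v_h ∈ V_h, v_h ≠ 0} b(v_h, q_h)/‖v_h‖ ≥ β̂ ‖q_h‖ for all q_h ∈ Q_h with β̂ > 0. Let Z_h := {v_h ∈ V_h : b(v_h, q_h) = 0 ∀ q_h} and Z := {v ∈ V : b(v, q_h) = 0 ∀ q_h}. Then for every v ∈ Z, inf_{v_h ∈ Z_h} ‖v − v_h‖ ≤ (1 + ‖b‖/β̂) inf_{w_h ∈ V_h} ‖v − w_h‖. -/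
open InnerProductSpace ContinuousLinearMap RealInnerProductSpace

/-- Abstract inf-sup approximation of the discrete kernel: under the discrete
inf-sup condition, for every `v` in the continuous kernel `Z`,
`inf_{v_h ∈ Z_h} ‖v − v_h‖ ≤ (1 + ‖b‖/β̂) inf_{w_h ∈ V_h} ‖v − w_h‖`. -/
theorem stmt12 (V : Type*) [NormedAddCommGroup V] [InnerProductSpace ℝ V]
    [CompleteSpace V]
    (Q : Type*) [NormedAddCommGroup Q] [InnerProductSpace ℝ Q] [CompleteSpace Q]
    (Vh : Submodule ℝ V) (hVh : IsClosed (Vh : Set V))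
    (b : V →ₗ[ℝ] Q →ₗ[ℝ] ℝ) (Cb : ℝ) (hCb : 0 < Cb)
    (hbound : ∀ (v : V) (q : Q), |b v q| ≤ Cb * ‖v‖ * ‖q‖)
    (β : ℝ) (hβ : 0 < β)
    (hinfsup : ∀ q : Q,
      β * ‖q‖ ≤ sSup {r : ℝ | ∃ vh ∈ Vh, vh ≠ 0 ∧ r = b vh q / ‖vh‖})
    (v : V) (hv : ∀ q : Q, b v q = 0) :
    (⨅ vh : {x : V // x ∈ Vh ∧ ∀ q : Q, b x q = 0}, ‖v - (vh : V)‖) ≤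
      (1 + Cb / β) * ⨅ wh : Vh, ‖v - (wh : V)‖ := by
  haveI : CompleteSpace Vh := hVh.completeSpace_coe
  -- continuous bilinear form
  set B : V →L[ℝ] Q →L[ℝ] ℝ := LinearMap.mkContinuous₂ b Cb
    (fun x q => by simpa [Real.norm_eq_abs] using hbound x q) with hBdef
  have hBapp : ∀ (x : V) (q : Q), B x q = b x q := fun x q => rfl
  -- the operator T : Vh → Q with ⟪T w, q⟫ = b w q
  set T : Vh →L[ℝ] Q :=
    ((InnerProductSpace.toDual ℝ Q).symm.toContinuousLinearEquiv :
      (Q →L[ℝ] ℝ) ≃L[ℝ] Q).toContinuousLinearMap.comp (B.comp Vh.subtypeL) with hTdef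
  have hT : ∀ (w : Vh) (q : Q), ⟪T w, q⟫_ℝ = b (w : V) q := by
    intro w q
    simp only [hTdef, ContinuousLinearMap.comp_apply,
      ContinuousLinearEquiv.coe_coe, LinearIsometryEquiv.coe_toContinuousLinearEquiv,
      InnerProductSpace.toDual_symm_apply, Submodule.subtypeL_apply]
    exact hBapp _ _
  set Ts : Q →L[ℝ] Vh := ContinuousLinearMap.adjoint T with hTsdef
  have hTs : ∀ (w : Vh) (q : Q), ⟪w, Ts q⟫_ℝ = b (w : V) q := by
    intro w q
    rw [hTsdef, ContinuousLinearMap.adjoint_inner_right]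
    exact hT w q
  -- inf-sup gives lower bound for adjoint
  have hlow : ∀ q : Q, β * ‖q‖ ≤ ‖Ts q‖ := by
    intro q
    refine (hinfsup q).trans (Real.sSup_le ?_ (norm_nonneg _))
    rintro r ⟨vh, hmem, hne, rfl⟩
    have hvn : (0:ℝ) < ‖vh‖ := norm_pos_iff.mpr hne
    rw [div_le_iff₀ hvn]
    calc b vh q = ⟪(⟨vh, hmem⟩ : Vh), Ts q⟫_ℝ := (hTs ⟨vh, hmem⟩ q).symm
      _ ≤ ‖(⟨vh, hmem⟩ : Vh)‖ * ‖Ts q‖ := real_inner_le_norm _ _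
      _ = ‖Ts q‖ * ‖vh‖ := by rw [mul_comm]; rfl
  -- Lax–Milgram for S = T ∘ T*
  set S : Q →L[ℝ] Q := T.comp Ts with hSdef
  have hSinner : ∀ q r : Q, ⟪S q, r⟫_ℝ = ⟪Ts q, Ts r⟫_ℝ := by
    intro q r
    rw [hSdef, ContinuousLinearMap.comp_apply, hTsdef,
      ← ContinuousLinearMap.adjoint_inner_right T]
  set B2 : Q →L[ℝ] Q →L[ℝ] ℝ := (innerSL ℝ).comp S with hB2def
  have hB2app : ∀ q r : Q, B2 q r = ⟪S q, r⟫_ℝ := fun q r => rfl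
  have coercive : IsCoercive B2 := by
    refine ⟨β * β, mul_pos hβ hβ, fun u => ?_⟩
    have h1 : (β * ‖u‖) * (β * ‖u‖) ≤ ‖Ts u‖ * ‖Ts u‖ :=
      mul_le_mul (hlow u) (hlow u) (by positivity) (norm_nonneg _)
    calc β * β * ‖u‖ * ‖u‖ = (β * ‖u‖) * (β * ‖u‖) := by ring
      _ ≤ ‖Ts u‖ * ‖Ts u‖ := h1
      _ = ⟪Ts u, Ts u⟫_ℝ := (real_inner_self_eq_norm_mul_norm _).symm
      _ = ⟪S u, u⟫_ℝ := (hSinner u u).symm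
      _ = B2 u u := rfl
  have hSsurj : ∀ f : Q, ∃ g : Q, S g = f := by
    intro f
    refine ⟨coercive.continuousLinearEquivOfBilin.symm f, ?_⟩
    refine ext_inner_right ℝ fun w => ?_
    have := coercive.continuousLinearEquivOfBilin_apply
      (coercive.continuousLinearEquivOfBilin.symm f) w
    rw [ContinuousLinearEquiv.apply_symm_apply] at this
    rw [this]; rfl
  -- key pointwise estimate
  have key : ∀ wh : Vh, ∃ vh : {x : V // x ∈ Vh ∧ ∀ q : Q, b x q = 0},
      ‖v - (vh : V)‖ ≤ (1 + Cb / β) * ‖v - (wh : V)‖ := by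
    intro wh
    set f : Q := (InnerProductSpace.toDual ℝ Q).symm (B (v - (wh : V))) with hfdef
    have hf : ∀ q : Q, ⟪f, q⟫_ℝ = b (v - (wh : V)) q := fun q => by
      rw [hfdef, InnerProductSpace.toDual_symm_apply]; exact hBapp _ _
    obtain ⟨g, hg⟩ := hSsurj f
    set r0 : Vh := Ts g with hr0def
    have hr0 : ∀ q : Q, b (r0 : V) q = b (v - (wh : V)) q := by
      intro q
      rw [← hT r0 q, hr0def, show T (Ts g) = f from hg, hf]
    -- ‖f‖ ≤ Cb * ‖v - wh‖
    have hfnorm : ‖f‖ ≤ Cb * ‖v - (wh : V)‖ := by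
      rcases eq_or_lt_of_le (norm_nonneg f) with h0 | h0
      · rw [← h0]; positivity
      · have : ‖f‖ * ‖f‖ ≤ (Cb * ‖v - (wh : V)‖) * ‖f‖ := by
          calc ‖f‖ * ‖f‖ = ⟪f, f⟫_ℝ := (real_inner_self_eq_norm_mul_norm _).symm
            _ = b (v - (wh : V)) f := hf f
            _ ≤ |b (v - (wh : V)) f| := le_abs_self _
            _ ≤ Cb * ‖v - (wh : V)‖ * ‖f‖ := hbound _ _
        exact le_of_mul_le_mul_right this h0
    -- β ‖r0‖ ≤ ‖f‖
    have hr0norm : β * ‖r0‖ ≤ ‖f‖ := by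
      rcases eq_or_lt_of_le (norm_nonneg r0) with h0 | h0
      · rw [← h0, mul_zero]; exact norm_nonneg _
      · have hgr : β * ‖g‖ ≤ ‖r0‖ := hlow g
        have h1 : ‖r0‖ * ‖r0‖ ≤ ‖f‖ * ‖g‖ := by
          calc ‖r0‖ * ‖r0‖ = ⟪r0, r0⟫_ℝ := (real_inner_self_eq_norm_mul_norm _).symm
            _ = ⟪Ts g, Ts g⟫_ℝ := rfl
            _ = ⟪S g, g⟫_ℝ := (hSinner g g).symm
            _ = ⟪f, g⟫_ℝ := by rw [hg]
            _ ≤ ‖f‖ * ‖g‖ := real_inner_le_norm _ _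
        have h2 : β * (‖r0‖ * ‖r0‖) ≤ ‖f‖ * ‖r0‖ := by
          calc β * (‖r0‖ * ‖r0‖) ≤ β * (‖f‖ * ‖g‖) :=
                mul_le_mul_of_nonneg_left h1 hβ.le
            _ = ‖f‖ * (β * ‖g‖) := by ring
            _ ≤ ‖f‖ * ‖r0‖ := mul_le_mul_of_nonneg_left hgr (norm_nonneg _)
        have := le_of_mul_le_mul_right (by linarith [h2] : (β * ‖r0‖) * ‖r0‖ ≤ ‖f‖ * ‖r0‖) h0
        exact this
    -- assemble
    have hmem : (wh : V) + (r0 : V) ∈ Vh := Vh.add_mem wh.2 r0.2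
    have hker : ∀ q : Q, b ((wh : V) + (r0 : V)) q = 0 := by
      intro q
      have : b ((wh : V) + (r0 : V)) q = b (wh : V) q + b ((r0 : V)) q := by
        rw [map_add]; rfl
      rw [this, hr0 q, map_sub, LinearMap.sub_apply, hv q]
      ring
    refine ⟨⟨(wh : V) + (r0 : V), hmem, hker⟩, ?_⟩
    have hr0V : ‖(r0 : V)‖ = ‖r0‖ := rfl
    have hnorm1 : ‖v - ((wh : V) + (r0 : V))‖ ≤ ‖v - (wh : V)‖ + ‖r0‖ := by
      calc ‖v - ((wh : V) + (r0 : V))‖ = ‖(v - (wh : V)) - (r0 : V)‖ := by rw [sub_add_eq_sub_sub]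
        _ ≤ ‖v - (wh : V)‖ + ‖(r0 : V)‖ := norm_sub_le _ _
        _ = ‖v - (wh : V)‖ + ‖r0‖ := by rw [hr0V]
    have hr0b : ‖r0‖ ≤ (Cb / β) * ‖v - (wh : V)‖ := by
      rw [div_mul_eq_mul_div, le_div_iff₀ hβ, mul_comm ‖r0‖ β]
      exact hr0norm.trans hfnorm
    calc ‖v - ((wh : V) + (r0 : V))‖ ≤ ‖v - (wh : V)‖ + ‖r0‖ := hnorm1
      _ ≤ ‖v - (wh : V)‖ + (Cb / β) * ‖v - (wh : V)‖ := by linarith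
      _ = (1 + Cb / β) * ‖v - (wh : V)‖ := by ring
  -- conclude with infima
  have hc : (0:ℝ) ≤ 1 + Cb / β := by positivity
  have hbdd : BddBelow (Set.range fun vh : {x : V // x ∈ Vh ∧ ∀ q : Q, b x q = 0} =>
      ‖v - (vh : V)‖) := ⟨0, by rintro r ⟨vh, rfl⟩; exact norm_nonneg _⟩
  rw [Real.mul_iInf_of_nonneg hc]
  refine le_ciInf fun wh => ?_
  obtain ⟨vh, hvh⟩ := key wh
  exact (ciInf_le hbdd vh).trans hvh
end

section
/- Combined inf-sup for a sum of constraints: let Φ be a Hilbert space and M₁, M₂ Hilbert spaces, with bounded bilinear forms b₁ : Φ × M₁ → ℝ and d : Φ × M₂ → ℝ (bound c_cont for d). Suppose for every q ∈ M₁ there exists φ₁ with ‖φ₁‖ ≤ b₁* ‖q‖ and b₁(φ₁, q) ≥ c₁ ‖q‖², and for every m ∈ M₂ there exists φ₂ with ‖φ₂‖ ≤ b₂* ‖m‖, d(φ₂, m) ≥ c₂ ‖m‖², and b₁(φ₂, q) = 0 for all q ∈ M₁. Then there exist constants b₀, c₀ > 0 (depending only on b₁*, b₂*, c₁, c₂,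 c_cont) such that for every (q, m) ∈ M₁ × M₂ there is φ ∈ Φ with ‖φ‖ ≤ b₀(‖q‖ + ‖m‖) and b₁(φ, q) + d(φ, m) ≥ c₀ (‖q‖ + ‖m‖)². -/
set_option maxHeartbeats 1000000 in
/-- Combined inf-sup for a sum of constraints: given separate inf-sup type
conditions for `b₁` and `d` (with the second family of test functions lying in
the kernel of `b₁`), there are `b₀, c₀ > 0` such that for every `(q, m)` there
is `φ` with `‖φ‖ ≤ b₀(‖q‖+‖m‖)` and `b₁(φ,q) + d(φ,m) ≥ c₀(‖q‖+‖m‖)²`. -/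
theorem stmt15 (Φ M₁ M₂ : Type*)
    [NormedAddCommGroup Φ] [InnerProductSpace ℝ Φ] [CompleteSpace Φ]
    [NormedAddCommGroup M₁] [InnerProductSpace ℝ M₁] [CompleteSpace M₁]
    [NormedAddCommGroup M₂] [InnerProductSpace ℝ M₂] [CompleteSpace M₂]
    (b₁ : Φ →ₗ[ℝ] M₁ →ₗ[ℝ] ℝ) (d : Φ →ₗ[ℝ] M₂ →ₗ[ℝ] ℝ)
    (ccont : ℝ) (hccont : 0 < ccont)
    (hdbound : ∀ (φ : Φ) (m : M₂), |d φ m| ≤ ccont * ‖φ‖ * ‖m‖)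
    (b₁s b₂s c₁ c₂ : ℝ)
    (hb₁s : 0 < b₁s) (hb₂s : 0 < b₂s) (hc₁ : 0 < c₁) (hc₂ : 0 < c₂)
    (h1 : ∀ q : M₁, ∃ φ₁ : Φ, ‖φ₁‖ ≤ b₁s * ‖q‖ ∧ c₁ * ‖q‖ ^ 2 ≤ b₁ φ₁ q)
    (h2 : ∀ m : M₂, ∃ φ₂ : Φ, ‖φ₂‖ ≤ b₂s * ‖m‖ ∧ c₂ * ‖m‖ ^ 2 ≤ d φ₂ m ∧
      ∀ q : M₁, b₁ φ₂ q = 0) :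
    ∃ b₀ : ℝ, 0 < b₀ ∧ ∃ c₀ : ℝ, 0 < c₀ ∧
      ∀ (q : M₁) (m : M₂), ∃ φ : Φ,
        ‖φ‖ ≤ b₀ * (‖q‖ + ‖m‖) ∧
        c₀ * (‖q‖ + ‖m‖) ^ 2 ≤ b₁ φ q + d φ m := by

  obtain ⟨ξ, hξdef⟩ : ∃ ξ : ℝ, ξ = ccont ^ 2 * b₁s ^ 2 / (c₁ * c₂) := ⟨_, rfl⟩
  have hξ : 0 < ξ := by rw [hξdef]; positivity
  obtain ⟨K, hKdef⟩ : ∃ K : ℝ, K = ccont ^ 2 * b₁s ^ 2 / (2 * c₁) := ⟨_, rfl⟩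
  have hK : 0 < K := by rw [hKdef]; positivity
  have hKe : 2 * c₁ * K = ccont ^ 2 * b₁s ^ 2 := by rw [hKdef]; field_simp
  have hξc : ξ * c₂ = 2 * K := by rw [hξdef, hKdef]; field_simp
  refine ⟨max b₁s (ξ * b₂s), lt_max_of_lt_left hb₁s,
    min (c₁ / 2) K / 2, by positivity, ?_⟩
  intro q m
  obtain ⟨φ₁, hφ₁n, hφ₁b⟩ := h1 q
  obtain ⟨φ₂, hφ₂n, hφ₂d, hφ₂b⟩ := h2 m
  refine ⟨φ₁ + ξ • φ₂, ?_, ?_⟩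
  · have h1 := le_max_left b₁s (ξ * b₂s)
    have h2 := le_max_right b₁s (ξ * b₂s)
    calc ‖φ₁ + ξ • φ₂‖ ≤ ‖φ₁‖ + ‖ξ • φ₂‖ := norm_add_le _ _
      _ = ‖φ₁‖ + ξ * ‖φ₂‖ := by rw [norm_smul, Real.norm_of_nonneg hξ.le]
      _ ≤ b₁s * ‖q‖ + ξ * (b₂s * ‖m‖) := by
          gcongr
      _ ≤ max b₁s (ξ * b₂s) * (‖q‖ + ‖m‖) := by
          nlinarith [norm_nonneg q, norm_nonneg m]
  · have e1 : b₁ (φ₁ + ξ • φ₂) q = b₁ φ₁ q := by simp [hφ₂b q]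
    have e2 : d (φ₁ + ξ • φ₂) m = d φ₁ m + ξ * d φ₂ m := by simp
    rw [e1, e2]
    have hd1 : -(ccont * ‖φ₁‖ * ‖m‖) ≤ d φ₁ m := neg_le_of_abs_le (hdbound φ₁ m)
    have hd2 : -(ccont * (b₁s * ‖q‖) * ‖m‖) ≤ d φ₁ m := by
      nlinarith [hd1, mul_nonneg (mul_nonneg hccont.le (norm_nonneg m))
        (sub_nonneg.2 hφ₁n)]
    have hξd : ξ * (c₂ * ‖m‖ ^ 2) ≤ ξ * d φ₂ m := by
      exact mul_le_mul_of_nonneg_left hφ₂d hξ.le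
    have hξd2 : 2 * K * ‖m‖ ^ 2 ≤ ξ * d φ₂ m := by nlinarith [hξd]
    have hmin1 := min_le_left (c₁ / 2) K
    have hmin2 := min_le_right (c₁ / 2) K
    have hminpos : 0 < min (c₁ / 2) K := lt_min (by positivity) hK
    have key : 0 ≤ (c₁ / 2) * ‖q‖ ^ 2 - ccont * b₁s * ‖q‖ * ‖m‖ + K * ‖m‖ ^ 2 := by
      nlinarith [sq_nonneg (c₁ * ‖q‖ - ccont * b₁s * ‖m‖), hKe, hc₁]
    have s1 : min (c₁ / 2) K / 2 * (‖q‖ + ‖m‖) ^ 2 ≤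
        min (c₁ / 2) K * (‖q‖ ^ 2 + ‖m‖ ^ 2) := by
      nlinarith [mul_nonneg hminpos.le (sq_nonneg (‖q‖ - ‖m‖))]
    have s2 : min (c₁ / 2) K * (‖q‖ ^ 2 + ‖m‖ ^ 2) ≤
        (c₁ / 2) * ‖q‖ ^ 2 + K * ‖m‖ ^ 2 := by
      nlinarith [mul_le_mul_of_nonneg_right hmin1 (sq_nonneg ‖q‖),
        mul_le_mul_of_nonneg_right hmin2 (sq_nonneg ‖m‖)]
    linarith [key, hφ₁b, hd2, hξd2, s1, s2]
end
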